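/- arXiv:2208.00515 — 2 statements merged into one kernel-verified Lean document; each statement's English description precedes it below -/
import Mathlib

section
/- Let (a_n) be a sequence of nonzero complex numbers with |a_n| → ∞, and let (p_n) be a sequence of natural numbers such that for every r > 0 the series ∑_n (r/|a_n|)^(p_n+1) converges. Then the infinite product Π(z) = ∏_{n=1}^∞ E_{p_n}(z/a_n) converges locally uniformly on ℂ to an entire function whose zero set is exactly {a_n : n ∈ ℕ}. -/
open Complex Filter

noncomputable def weierstrassE (p : ℕ) (z : ℂ) : ℂ :=
  (1 - z) * Complex.exp (∑ k ∈ Finset.Icc 1 p, z ^ k / (k : ℂ))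

lemma wE_differentiable (p : ℕ) : Differentiable ℂ (weierstrassE p) := by
  unfold weierstrassE
  exact ((differentiable_const 1).sub differentiable_id).mul
    ((Differentiable.fun_sum fun k _ => (differentiable_pow k).div_const _).cexp)

lemma wE_zero_iff (p : ℕ) (z : ℂ) : weierstrassE p z = 0 ↔ z = 1 := by
  unfold weierstrassE
  rw [mul_eq_zero]
  simp only [Complex.exp_ne_zero, or_false, sub_eq_zero]
  exact eq_comm

lemma wE_zero (p : ℕ) : weierstrassE p 0 = 1 := by
  have : ∀ k ∈ Finset.Icc 1 p, (0:ℂ) ^ k / (k : ℂ) = 0 := by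
    intro k hk
    have : 1 ≤ k := (Finset.mem_Icc.mp hk).1
    simp [zero_pow (by omega : k ≠ 0)]
  simp [weierstrassE, Finset.sum_eq_zero this]

lemma wE_hasDerivAt (p : ℕ) (u : ℂ) :
    HasDerivAt (weierstrassE p)
      (-(u ^ p * Complex.exp (∑ k ∈ Finset.Icc 1 p, u ^ k / (k : ℂ)))) u := by
  have hS : HasDerivAt (fun z : ℂ => ∑ k ∈ Finset.Icc 1 p, z ^ k / (k : ℂ))
      (∑ k ∈ Finset.Icc 1 p, u ^ (k - 1)) u := by
    apply HasDerivAt.fun_sum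
    intro k hk
    have hk1 : 1 ≤ k := (Finset.mem_Icc.mp hk).1
    have hkne : (k : ℂ) ≠ 0 := Nat.cast_ne_zero.mpr (by omega)
    have h := (hasDerivAt_pow k u).div_const (k : ℂ)
    refine h.congr_deriv (Eq.symm ?_)
    rw [mul_div_cancel_left₀ _ hkne]
  have h1 : HasDerivAt (fun z : ℂ => 1 - z) (-1) u := by
    simpa using (hasDerivAt_id u).const_sub 1
  have h3 := h1.fun_mul hS.cexp
  have he : weierstrassE p =
      fun z : ℂ => (1 - z) * Complex.exp (∑ k ∈ Finset.Icc 1 p, z ^ k / (k : ℂ)) := rfl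
  rw [he]
  refine h3.congr_deriv (Eq.symm ?_)
  have hre : ∑ k ∈ Finset.Icc 1 p, u ^ (k - 1) = ∑ j ∈ Finset.range p, u ^ j := by
    rw [← Finset.Ico_add_one_right_eq_Icc, Finset.sum_Ico_eq_sum_range]
    simp
  have hgeom : (1 - u) * ∑ k ∈ Finset.Icc 1 p, u ^ (k - 1) = 1 - u ^ p := by
    rw [hre]
    have h := geom_sum_mul u p
    linear_combination -h
  set E := Complex.exp (∑ k ∈ Finset.Icc 1 p, u ^ k / (k : ℂ))
  linear_combination (-E) * hgeom

lemma wE_bound (p : ℕ) {w : ℂ} (hw : ‖w‖ ≤ 1 / 2) :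
    ‖weierstrassE p w - 1‖ ≤ 3 * ‖w‖ ^ (p + 1) := by
  have key : ∀ u ∈ Metric.closedBall (0:ℂ) ‖w‖,
      ‖-(u ^ p * Complex.exp (∑ k ∈ Finset.Icc 1 p, u ^ k / (k : ℂ)))‖ ≤ 3 * ‖w‖ ^ p := by
    intro u hu
    simp only [Metric.mem_closedBall, dist_zero_right] at hu
    have hu2 : ‖u‖ ≤ 1 / 2 := hu.trans hw
    have hsum : ‖∑ k ∈ Finset.Icc 1 p, u ^ k / (k : ℂ)‖ ≤ 1 := by
      calc ‖∑ k ∈ Finset.Icc 1 p, u ^ k / (k : ℂ)‖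
          ≤ ∑ k ∈ Finset.Icc 1 p, ‖u ^ k / (k : ℂ)‖ := norm_sum_le _ _
        _ ≤ ∑ k ∈ Finset.Icc 1 p, (1 / 2 : ℝ) ^ k := by
            apply Finset.sum_le_sum
            intro k hk
            have hk1 : 1 ≤ k := (Finset.mem_Icc.mp hk).1
            have : ‖u ^ k / (k : ℂ)‖ = ‖u‖ ^ k / (k : ℝ) := by
              rw [norm_div, norm_pow]
              simp
            rw [this]
            have h1 : ‖u‖ ^ k ≤ (1 / 2 : ℝ) ^ k := pow_le_pow_left₀ (norm_nonneg u) hu2 k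
            have h2 : (1 : ℝ) ≤ (k : ℝ) := by exact_mod_cast hk1
            calc ‖u‖ ^ k / (k : ℝ) ≤ ‖u‖ ^ k / 1 := by
                  apply div_le_div_of_nonneg_left ?_ ?_ h2 <;> positivity
              _ = ‖u‖ ^ k := div_one _
              _ ≤ (1 / 2 : ℝ) ^ k := h1
        _ = ∑ i ∈ Finset.range p, (1 / 2 : ℝ) ^ (1 + i) := by
            rw [← Finset.Ico_add_one_right_eq_Icc, Finset.sum_Ico_eq_sum_range]
            simp
        _ ≤ 1 := by
            have : ∑ i ∈ Finset.range p, (1 / 2 : ℝ) ^ (1 + i)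
                = (1 / 2) * ∑ i ∈ Finset.range p, (1 / 2 : ℝ) ^ i := by
              rw [Finset.mul_sum]
              exact Finset.sum_congr rfl fun i _ => by rw [pow_add, pow_one]
            rw [this]
            nlinarith [sum_geometric_two_le p]
    have hexp : ‖Complex.exp (∑ k ∈ Finset.Icc 1 p, u ^ k / (k : ℂ))‖ ≤ 3 := by
      rw [Complex.norm_exp]
      have : (∑ k ∈ Finset.Icc 1 p, u ^ k / (k : ℂ)).re ≤ 1 :=
        le_trans (Complex.re_le_norm _) hsum
      calc Real.exp _ ≤ Real.exp 1 := Real.exp_le_exp.mpr this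
        _ ≤ 3 := by nlinarith [Real.exp_one_lt_d9]
    rw [norm_neg, norm_mul, norm_pow]
    have h1 : ‖u‖ ^ p ≤ ‖w‖ ^ p := pow_le_pow_left₀ (norm_nonneg u) hu p
    nlinarith [pow_nonneg (norm_nonneg u) p, pow_nonneg (norm_nonneg w) p,
      norm_nonneg (Complex.exp (∑ k ∈ Finset.Icc 1 p, u ^ k / (k : ℂ)))]
  have := Convex.norm_image_sub_le_of_norm_hasDerivWithin_le
    (fun u _ => (wE_hasDerivAt p u).hasDerivWithinAt) key (convex_closedBall _ _)
    (Metric.mem_closedBall_self (norm_nonneg w))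
    (by simp : w ∈ Metric.closedBall (0:ℂ) ‖w‖)
  rw [wE_zero, sub_zero] at this
  calc ‖weierstrassE p w - 1‖ ≤ 3 * ‖w‖ ^ p * ‖w‖ := this
    _ = 3 * ‖w‖ ^ (p + 1) := by ring

lemma weierstrass_aux (a : ℕ → ℂ) (ha : ∀ n, a n ≠ 0)
    (ha' : Tendsto (fun n => ‖a n‖) atTop atTop)
    (p : ℕ → ℕ)
    (hp : ∀ r : ℝ, 0 < r → Summable (fun n => (r / ‖a n‖) ^ (p n + 1)))
    (r : ℝ) (hr : 0 < r) :
    ∃ F : ℂ → ℂ,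
      TendstoUniformlyOn (fun N z => ∏ n ∈ Finset.range N, weierstrassE (p n) (z / a n)) F
        atTop (Metric.closedBall 0 r) ∧
      ∀ z ∈ Metric.closedBall (0:ℂ) r, (F z = 0 ↔ ∃ n, z = a n) := by
  obtain ⟨N₀, hN₀⟩ := eventually_atTop.mp (ha'.eventually_ge_atTop (8 * r))
  set g : ℕ → ℂ → ℂ := fun n z => weierstrassE (p n) (z / a n) with hg
  set s := Metric.closedBall (0:ℂ) r with hs
  -- basic estimates
  have habs : ∀ n, 0 < ‖a n‖ := fun n => norm_pos_iff.mpr (ha n)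
  have hq : ∀ n, N₀ ≤ n → ∀ z ∈ s, ‖z / a n‖ ≤ r / ‖a n‖ ∧
      r / ‖a n‖ ≤ 1 / 8 := by
    intro n hn z hz
    simp only [hs, Metric.mem_closedBall, dist_zero_right] at hz
    have h8 := hN₀ n hn
    constructor
    · rw [norm_div]
      gcongr
    · rw [div_le_div_iff₀ (habs n) (by norm_num)]
      linarith
  have hgb : ∀ n, N₀ ≤ n → ∀ z ∈ s,
      ‖g n z - 1‖ ≤ 3 * (r / ‖a n‖) ^ (p n + 1) ∧ ‖g n z - 1‖ ≤ 1 / 2 := by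
    intro n hn z hz
    obtain ⟨h1, h2⟩ := hq n hn z hz
    have hb := wE_bound (p n) (w := z / a n) (by linarith)
    have h3 : ‖z / a n‖ ^ (p n + 1) ≤ (r / ‖a n‖) ^ (p n + 1) :=
      pow_le_pow_left₀ (norm_nonneg _) h1 _
    have h4 : (r / ‖a n‖) ^ (p n + 1) ≤ (1/8 : ℝ) ^ (p n + 1) :=
      pow_le_pow_left₀ (by positivity) h2 _
    have h5 : ((1:ℝ)/8) ^ (p n + 1) ≤ (1/8 : ℝ) ^ 1 :=
      pow_le_pow_of_le_one (by norm_num) (by norm_num) (by omega)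
    refine ⟨le_trans hb (by nlinarith), le_trans hb (by nlinarith)⟩
  have hne : ∀ n, N₀ ≤ n → ∀ z ∈ s, g n z ≠ 0 := by
    intro n hn z hz h0
    have := (hgb n hn z hz).2
    rw [h0] at this
    norm_num at this
  set M : ℕ → ℝ := fun n => 9/2 * (r / ‖a n‖) ^ (p n + 1) with hM
  have hMsum : Summable M := (hp r hr).mul_left _
  have hMnn : ∀ n, 0 ≤ M n := fun n => by positivity
  have hlog : ∀ n, N₀ ≤ n → ∀ z ∈ s, ‖Complex.log (g n z)‖ ≤ M n := by
    intro n hn z hz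
    obtain ⟨h1, h2⟩ := hgb n hn z hz
    have h3 := Complex.norm_log_one_add_half_le_self (z := g n z - 1) h2
    rw [show (1:ℂ) + (g n z - 1) = g n z by ring] at h3
    calc ‖Complex.log (g n z)‖ ≤ 3/2 * ‖g n z - 1‖ := h3
      _ ≤ 3/2 * (3 * (r / ‖a n‖) ^ (p n + 1)) := by linarith
      _ = M n := by rw [hM]; ring
  have hMshift : Summable fun n => M (N₀ + n) := by
    have := (summable_nat_add_iff N₀).mpr hMsum
    simpa [add_comm] using this
  set S : ℂ → ℂ := fun z => ∑' n, Complex.log (g (N₀ + n) z) with hS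
  have hSunif : TendstoUniformlyOn
      (fun N z => ∑ n ∈ Finset.range N, Complex.log (g (N₀ + n) z)) S atTop s :=
    tendstoUniformlyOn_tsum_nat hMshift
      (fun n z hz => hlog (N₀ + n) (by omega) z hz)
  set C : ℝ := ∑' n, M (N₀ + n) with hC
  have hSb : ∀ z ∈ s, ‖S z‖ ≤ C := by
    intro z hz
    have hsum : Summable fun n => ‖Complex.log (g (N₀ + n) z)‖ :=
      Summable.of_nonneg_of_le (fun _ => norm_nonneg _)
        (fun n => hlog (N₀ + n) (by omega) z hz) hMshift
    calc ‖S z‖ ≤ ∑' n, ‖Complex.log (g (N₀ + n) z)‖ := norm_tsum_le_tsum_norm hsum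
      _ ≤ C := Summable.tsum_le_tsum (fun n => hlog (N₀ + n) (by omega) z hz) hsum hMshift
  have hC0 : 0 ≤ C := tsum_nonneg fun n => hMnn _
  have heC : (0:ℝ) < Real.exp C := Real.exp_pos C
  -- uniform convergence of exponentials
  have hexp_unif : TendstoUniformlyOn
      (fun N z => Complex.exp (∑ n ∈ Finset.range N, Complex.log (g (N₀ + n) z)))
      (fun z => Complex.exp (S z)) atTop s := by
    rw [Metric.tendstoUniformlyOn_iff] at hSunif ⊢
    intro ε hε
    have hδ : (0:ℝ) < min 1 (ε / (2 * Real.exp C + 1)) := by positivity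
    filter_upwards [hSunif _ hδ] with N hN z hz
    have h1 := hN z hz
    rw [dist_eq_norm] at h1 ⊢
    set A := ∑ n ∈ Finset.range N, Complex.log (g (N₀ + n) z) with hA
    have hfac : Complex.exp (S z) - Complex.exp A
        = Complex.exp (S z) * (1 - Complex.exp (A - S z)) := by
      rw [mul_sub, mul_one, ← Complex.exp_add]
      congr 2
      ring
    have h2 : ‖Complex.exp (S z)‖ ≤ Real.exp C := by
      rw [Complex.norm_exp]
      exact Real.exp_le_exp.mpr (le_trans (Complex.re_le_norm _) (hSb z hz))
    have hAS : ‖A - S z‖ < min 1 (ε / (2 * Real.exp C + 1)) := by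
      rwa [norm_sub_rev]
    have h3 : ‖1 - Complex.exp (A - S z)‖ ≤ 2 * ‖A - S z‖ := by
      rw [norm_sub_rev]
      exact Complex.norm_exp_sub_one_le
        (le_of_lt (lt_of_lt_of_le hAS (min_le_left _ _)))
    have h4 : ‖A - S z‖ < ε / (2 * Real.exp C + 1) :=
      lt_of_lt_of_le hAS (min_le_right _ _)
    calc ‖Complex.exp (S z) - Complex.exp A‖
        = ‖Complex.exp (S z)‖ * ‖1 - Complex.exp (A - S z)‖ := by rw [hfac, norm_mul]
      _ ≤ Real.exp C * (2 * ‖A - S z‖) := by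
          apply mul_le_mul h2 h3 (norm_nonneg _) (le_of_lt heC)
      _ < ε := by
          have hd := norm_nonneg (A - S z)
          have h5 := (lt_div_iff₀ (by positivity : (0:ℝ) < 2 * Real.exp C + 1)).mp h4
          nlinarith
  -- prefix product
  set P : ℂ → ℂ := fun z => ∏ n ∈ Finset.range N₀, g n z with hP
  have hPcont : Continuous P := by
    apply continuous_finset_prod
    intro n _
    exact (wE_differentiable (p n)).continuous.comp (continuous_id.div_const (a n))
  obtain ⟨B, hB⟩ := (isCompact_closedBall (0:ℂ) r).exists_bound_of_continuousOn
    hPcont.continuousOn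
  set B' : ℝ := max B 1 with hB'
  have hB'0 : (0:ℝ) < B' := lt_of_lt_of_le one_pos (le_max_right _ _)
  have hPb : ∀ z ∈ s, ‖P z‖ ≤ B' := fun z hz => le_trans (hB z hz) (le_max_left _ _)
  set F : ℂ → ℂ := fun z => P z * Complex.exp (S z) with hF
  have hFunif : TendstoUniformlyOn
      (fun N z => P z * Complex.exp (∑ n ∈ Finset.range N, Complex.log (g (N₀ + n) z)))
      F atTop s := by
    rw [Metric.tendstoUniformlyOn_iff] at hexp_unif ⊢
    intro ε hε
    filter_upwards [hexp_unif (ε / B') (by positivity)] with N hN z hz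
    have h1 := hN z hz
    rw [dist_eq_norm] at h1 ⊢
    calc ‖F z - P z * Complex.exp (∑ n ∈ Finset.range N, Complex.log (g (N₀ + n) z))‖
        = ‖P z‖ * ‖Complex.exp (S z) -
            Complex.exp (∑ n ∈ Finset.range N, Complex.log (g (N₀ + n) z))‖ := by
          rw [hF, ← norm_mul, mul_sub]
      _ ≤ B' * ‖Complex.exp (S z) -
            Complex.exp (∑ n ∈ Finset.range N, Complex.log (g (N₀ + n) z))‖ :=
          mul_le_mul_of_nonneg_right (hPb z hz) (norm_nonneg _)
      _ < B' * (ε / B') := by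
          exact mul_lt_mul_of_pos_left h1 hB'0
      _ = ε := by field_simp
  have hEq : ∀ N : ℕ, ∀ z ∈ s,
      (∏ n ∈ Finset.range (N₀ + N), g n z)
        = P z * Complex.exp (∑ n ∈ Finset.range N, Complex.log (g (N₀ + n) z)) := by
    intro N z hz
    rw [Finset.prod_range_add]
    congr 1
    rw [Complex.exp_sum]
    exact Finset.prod_congr rfl fun i _ =>
      (Complex.exp_log (hne (N₀ + i) (by omega) z hz)).symm
  have hShift : TendstoUniformlyOn
      (fun N z => ∏ n ∈ Finset.range (N₀ + N), g n z) F atTop s := by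
    apply hFunif.congr
    filter_upwards with N z hz
    exact (hEq N z hz).symm
  refine ⟨F, ?_, ?_⟩
  · intro u hu
    obtain ⟨N₁, h⟩ := eventually_atTop.mp (hShift u hu)
    rw [eventually_atTop]
    refine ⟨N₀ + N₁, fun N hN => ?_⟩
    have h2 := h (N - N₀) (by omega)
    intro x hx
    have h3 := h2 x hx
    simpa only [show N₀ + (N - N₀) = N from by omega, hg] using h3
  · intro z hz
    have hzr : ‖z‖ ≤ r := by
      simpa [hs, Metric.mem_closedBall, dist_zero_right] using hz
    rw [hF]
    rw [mul_eq_zero]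
    simp only [Complex.exp_ne_zero, or_false]
    rw [hP, Finset.prod_eq_zero_iff]
    constructor
    · rintro ⟨n, _, hn0⟩
      have := (wE_zero_iff (p n) (z / a n)).mp hn0
      exact ⟨n, (div_eq_one_iff_eq (ha n)).mp this⟩
    · rintro ⟨n, rfl⟩
      have hnN : n < N₀ := by
        by_contra hc
        have h8 := hN₀ n (by omega)
        have : ‖a n‖ = ‖a n‖ := rfl
        rw [this] at hzr
        linarith
      refine ⟨n, Finset.mem_range.mpr hnN, ?_⟩
      rw [hg]
      simp only
      rw [wE_zero_iff, div_self (ha n)]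

theorem weierstrass_product_entire
    (a : ℕ → ℂ) (ha : ∀ n, a n ≠ 0)
    (ha' : Tendsto (fun n => ‖a n‖) atTop atTop)
    (p : ℕ → ℕ)
    (hp : ∀ r : ℝ, 0 < r → Summable (fun n => (r / ‖a n‖) ^ (p n + 1))) :
    ∃ f : ℂ → ℂ, Differentiable ℂ f ∧
      TendstoLocallyUniformly
        (fun N z => ∏ n ∈ Finset.range N, weierstrassE (p n) (z / a n)) f atTop ∧
      ∀ z : ℂ, f z = 0 ↔ ∃ n, z = a n := by
  set Q : ℕ → ℂ → ℂ := fun N z => ∏ n ∈ Finset.range N, weierstrassE (p n) (z / a n) with hQ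
  set f : ℂ → ℂ := fun z => limUnder atTop (fun N => Q N z) with hf
  have key : ∀ r : ℝ, 0 < r →
      TendstoUniformlyOn Q f atTop (Metric.closedBall 0 r) ∧
      ∀ z ∈ Metric.closedBall (0:ℂ) r, (f z = 0 ↔ ∃ n, z = a n) := by
    intro r hr
    obtain ⟨F, hF, hF0⟩ := weierstrass_aux a ha ha' p hp r hr
    have hfF : ∀ z ∈ Metric.closedBall (0:ℂ) r, f z = F z := by
      intro z hz
      exact (hF.tendsto_at hz).limUnder_eq
    refine ⟨hF.congr_right fun z hz => (hfF z hz).symm, fun z hz => ?_⟩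
    rw [hfF z hz]
    exact hF0 z hz
  have hTLU : TendstoLocallyUniformly Q f atTop := by
    rw [tendstoLocallyUniformly_iff_forall_isCompact]
    intro K hK
    obtain ⟨rK, hrK⟩ := hK.isBounded.subset_closedBall 0
    have hsub : K ⊆ Metric.closedBall 0 (max rK 1) :=
      hrK.trans (Metric.closedBall_subset_closedBall (le_max_left _ _))
    exact ((key (max rK 1) (lt_of_lt_of_le one_pos (le_max_right _ _))).1).mono hsub
  have hdiff : Differentiable ℂ f := by
    have hd : DifferentiableOn ℂ f Set.univ := by
      apply TendstoLocallyUniformlyOn.differentiableOn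
        ((tendstoLocallyUniformlyOn_univ).mpr hTLU) ?_ isOpen_univ
      filter_upwards with N
      apply Differentiable.differentiableOn
      apply Differentiable.fun_finsetProd
      intro i _
      exact (wE_differentiable (p i)).comp (differentiable_id.div_const (a i))
    rw [← differentiableOn_univ]
    exact hd
  refine ⟨f, hdiff, hTLU, fun z => ?_⟩
  have hz : z ∈ Metric.closedBall (0:ℂ) (‖z‖ + 1) := by
    rw [Metric.mem_closedBall, dist_zero_right]
    linarith
  exact (key (‖z‖ + 1) (by positivity)).2 z hz
end

section
/- Let γ be a Poisson point process on ℂ with intensity the Lebesgue measure m, and let p ≥ 2. Then for π_m-almost every configuration γ, the infinite product Π_p(z, γ) = ∏_{x ∈ γ, x ≠ 0} E_p(z/x) converges locally uniformly in z and defines an entire function of z ∈ ℂ whose zero set is exactly γ \ {0}, each zero being simple (almost surely). -/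
open Complex MeasureTheory Filter

instance : MeasurableSpace (Set ℂ) :=
  .generateFrom {A | ∃ (B : Set ℂ) (n : ℕ), MeasurableSet B ∧ A = {γ | (γ ∩ B).ncard = n}}

def IsPoissonPP (π : Measure (Set ℂ)) (σ : Measure ℂ) : Prop :=
  IsProbabilityMeasure π ∧
  (∀ᵐ γ ∂π, ∀ K : Set ℂ, IsCompact K → (γ ∩ K).Finite) ∧
  ∀ f : ℂ → ℝ, Continuous f → HasCompactSupport f →
    ∫ γ, Real.exp (∑' x : γ, f (x : ℂ)) ∂π =
      Real.exp (∫ x, (Real.exp (f x) - 1) ∂σ)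

namespace PoissonPfAux

noncomputable def wL (p : ℕ) (w : ℂ) : ℂ :=
  Complex.log (1 - w) + ∑ k ∈ Finset.Icc 1 p, w ^ k / (k : ℂ)

lemma weierstrassE_eq_exp (p : ℕ) {w : ℂ} (hw : w ≠ 1) :
    weierstrassE p w = Complex.exp (wL p w) := by
  have h1 : (1 : ℂ) - w ≠ 0 := sub_ne_zero.mpr (Ne.symm hw)
  rw [wL, Complex.exp_add, Complex.exp_log h1, weierstrassE]

lemma weierstrassE_ne_zero {p : ℕ} {w : ℂ} (hw : w ≠ 1) : weierstrassE p w ≠ 0 := by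
  rw [weierstrassE_eq_exp p hw]; exact Complex.exp_ne_zero _

lemma weierstrassE_one (p : ℕ) : weierstrassE p 1 = 0 := by
  simp [weierstrassE]

lemma norm_wL_le (p : ℕ) {w : ℂ} (hw : ‖w‖ ≤ 1 / 2) :
    ‖wL p w‖ ≤ 2 * ‖w‖ ^ (p + 1) := by
  have hw1 : ‖w‖ < 1 := lt_of_le_of_lt hw (by norm_num)
  have h1 : HasSum (fun n : ℕ ↦ w ^ n / (n : ℂ)) (-Complex.log (1 - w)) :=
    Complex.hasSum_taylorSeries_neg_log hw1
  have hrange : ∑ i ∈ Finset.range (p + 1), w ^ i / (i : ℂ)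
      = ∑ k ∈ Finset.Icc 1 p, w ^ k / (k : ℂ) := by
    rw [eq_comm]
    apply Finset.sum_subset
    · intro x hx; simp only [Finset.mem_Icc] at hx; exact Finset.mem_range.mpr (by omega)
    · intro x hx hx'
      simp only [Finset.mem_range] at hx; simp only [Finset.mem_Icc] at hx'
      have hx0 : x = 0 := by omega
      subst hx0; simp
  have h2 : HasSum (fun n : ℕ ↦ (fun m : ℕ => w ^ m / (m : ℂ)) (n + (p + 1)))
      (-Complex.log (1 - w) - ∑ i ∈ Finset.range (p + 1), w ^ i / (i : ℂ)) := by
    apply (hasSum_nat_add_iff (f := fun m : ℕ => w ^ m / (m : ℂ)) (p + 1)).mpr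
    rw [sub_add_cancel]
    exact h1
  have h2' : -Complex.log (1 - w) - ∑ i ∈ Finset.range (p + 1), w ^ i / (i : ℂ)
      = -(wL p w) := by
    rw [hrange, wL]; ring
  rw [h2'] at h2
  have hg : HasSum (fun n : ℕ ↦ ‖w‖ ^ (p + 1) * (1 / 2 : ℝ) ^ n) (‖w‖ ^ (p + 1) * 2) := by
    have hgeo := hasSum_geometric_of_lt_one (by norm_num : (0:ℝ) ≤ 1/2) (by norm_num : (1/2:ℝ) < 1)
    have : ((1:ℝ) - 1/2)⁻¹ = 2 := by norm_num
    rw [this] at hgeo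
    exact hgeo.mul_left _
  have hb : ∀ n : ℕ, ‖(fun m : ℕ => w ^ m / (m : ℂ)) (n + (p + 1))‖
      ≤ ‖w‖ ^ (p + 1) * (1 / 2 : ℝ) ^ n := by
    intro n
    simp only
    rw [norm_div, norm_pow]
    have hden : (1:ℝ) ≤ ‖((n + (p + 1) : ℕ) : ℂ)‖ := by
      rw [Complex.norm_natCast]
      exact_mod_cast Nat.one_le_iff_ne_zero.mpr (by omega)
    calc ‖w‖ ^ (n + (p + 1)) / ‖((n + (p + 1) : ℕ) : ℂ)‖
        ≤ ‖w‖ ^ (n + (p + 1)) := div_le_self (by positivity) hden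
      _ = ‖w‖ ^ n * ‖w‖ ^ (p + 1) := by rw [pow_add]
      _ ≤ (1/2 : ℝ) ^ n * ‖w‖ ^ (p + 1) := by
          apply mul_le_mul_of_nonneg_right (pow_le_pow_left₀ (norm_nonneg w) hw n) (by positivity)
      _ = ‖w‖ ^ (p + 1) * (1/2 : ℝ) ^ n := by ring
  have hfin := tsum_of_norm_bounded hg hb
  rw [h2.tsum_eq, norm_neg] at hfin
  linarith

lemma finite_norm_le {γ : Set ℂ} (hlf : ∀ K : Set ℂ, IsCompact K → (γ ∩ K).Finite)
    {δ : Set ℂ} (hδ : δ ⊆ γ) (ρ : ℝ) : {x : ↥δ | ‖(x : ℂ)‖ ≤ ρ}.Finite := by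
  have h1 : (γ ∩ Metric.closedBall 0 ρ).Finite := hlf _ (isCompact_closedBall 0 ρ)
  have h2 : {x : ↥δ | ‖(x : ℂ)‖ ≤ ρ}
      = (Subtype.val : ↥δ → ℂ) ⁻¹' (γ ∩ Metric.closedBall 0 ρ) := by
    ext x
    simp only [Set.mem_setOf_eq, Set.mem_preimage, Set.mem_inter_iff, mem_closedBall_zero_iff]
    exact ⟨fun h => ⟨hδ x.2, h⟩, fun h => h.2⟩
  rw [h2]
  exact h1.preimage (Set.injOn_of_injective Subtype.val_injective)

theorem exists_entire (p : ℕ) (γ : Set ℂ)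
    (hlf : ∀ K : Set ℂ, IsCompact K → (γ ∩ K).Finite)
    (hsum : Summable fun x : ↥(γ \ ({0} : Set ℂ)) => (‖(x : ℂ)‖ ^ (p + 1))⁻¹) :
    ∃ f : ℂ → ℂ, Differentiable ℂ f ∧
      (∀ K : Set ℂ, IsCompact K →
        TendstoUniformlyOn
          (fun (s : Finset ↥(γ \ ({0} : Set ℂ))) (z : ℂ) =>
            ∏ x ∈ s, weierstrassE p (z / (x : ℂ)))
          f atTop K) ∧
      (∀ z : ℂ, f z = 0 ↔ z ∈ γ \ {0}) ∧
      (∀ z₀ ∈ γ \ {0}, deriv f z₀ ≠ 0) := by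
  classical
  have hxne : ∀ x : ↥(γ \ ({0} : Set ℂ)), (x : ℂ) ≠ 0 := fun x => x.2.2
  -- single factor facts
  have hfac : ∀ c : ℂ, Differentiable ℂ (fun z => weierstrassE p (z / c)) := by
    intro c
    have hd : Differentiable ℂ (fun z : ℂ => z / c) := differentiable_id.div_const c
    simp only [weierstrassE]
    apply Differentiable.mul
    · exact (differentiable_const (1:ℂ)).sub hd
    · exact Complex.differentiable_exp.comp <| Differentiable.fun_sum fun k _ => (hd.pow k).div_const _
  have hEnt : ∀ (s : Finset ↥(γ \ ({0} : Set ℂ))),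
      Differentiable ℂ (fun z => ∏ x ∈ s, weierstrassE p (z / (x : ℂ))) :=
    fun s => Differentiable.fun_finsetProd fun x _ => hfac _
  -- the key construction
  have key : ∀ R : ℝ, 0 ≤ R → ∃ (S : Finset ↥(γ \ ({0} : Set ℂ))) (E : ℂ → ℂ),
      (∀ x : ↥(γ \ ({0} : Set ℂ)), ‖(x : ℂ)‖ ≤ 2 * R + 1 → x ∈ S) ∧
      (∀ z : ℂ, E z ≠ 0) ∧
      DifferentiableOn ℂ E (Metric.ball 0 R) ∧
      TendstoUniformlyOn
        (fun (s : Finset ↥(γ \ ({0} : Set ℂ))) (z : ℂ) =>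
          ∏ x ∈ s, weierstrassE p (z / (x : ℂ)))
        (fun z => (∏ x ∈ S, weierstrassE p (z / (x : ℂ))) * E z) atTop
        (Metric.closedBall 0 R) := by
    intro R hR
    set ρ : ℝ := 2 * R + 1 with hρdef
    have hρpos : 0 < ρ := by positivity
    set S : Finset ↥(γ \ ({0} : Set ℂ)) :=
      (finite_norm_le hlf Set.diff_subset ρ).toFinset with hSdef
    have hmemS : ∀ x : ↥(γ \ ({0} : Set ℂ)), x ∈ S ↔ ‖(x : ℂ)‖ ≤ ρ := by
      intro x; rw [hSdef, Set.Finite.mem_toFinset]; rfl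
    set g : ↥(γ \ ({0} : Set ℂ)) → ℂ → ℂ :=
      fun x z => if x ∈ S then 0 else wL p (z / (x : ℂ)) with hgdef
    set u : ↥(γ \ ({0} : Set ℂ)) → ℝ :=
      fun x => if x ∈ S then 0 else 2 * R ^ (p + 1) * (‖(x : ℂ)‖ ^ (p + 1))⁻¹ with hudef
    have hu_sum : Summable u := by
      apply Summable.of_nonneg_of_le (fun x => ?_) (fun x => ?_)
        (hsum.mul_left (2 * R ^ (p + 1)))
      · by_cases h : x ∈ S
        · simp only [hudef, if_pos h]; positivity
        · simp only [hudef, if_neg h]; positivity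
      · by_cases h : x ∈ S
        · simp only [hudef, if_pos h]; positivity
        · simp only [hudef, if_neg h]
          exact le_rfl
    have hxnorm : ∀ x : ↥(γ \ ({0} : Set ℂ)), x ∉ S → ρ < ‖(x : ℂ)‖ :=
      fun x h => lt_of_not_ge (fun hc => h ((hmemS x).mpr hc))
    have hgu : ∀ (x : ↥(γ \ ({0} : Set ℂ))) (z : ℂ), z ∈ Metric.closedBall (0:ℂ) R →
        ‖g x z‖ ≤ u x := by
      intro x z hz
      by_cases h : x ∈ S
      · simp [hgdef, hudef, h]
      · simp only [hgdef, hudef, if_neg h]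
        have hxρ : ρ < ‖(x : ℂ)‖ := hxnorm x h
        have hz' : ‖z‖ ≤ R := mem_closedBall_zero_iff.mp hz
        have hxpos : 0 < ‖(x : ℂ)‖ := lt_trans hρpos hxρ
        have hhalf : ‖z / (x : ℂ)‖ ≤ 1 / 2 := by
          rw [norm_div, div_le_iff₀ hxpos]
          nlinarith
        have h1 := norm_wL_le p hhalf
        have h2 : ‖z / (x : ℂ)‖ ^ (p + 1) ≤ R ^ (p + 1) * (‖(x : ℂ)‖ ^ (p + 1))⁻¹ := by
          rw [norm_div, div_pow, div_eq_mul_inv]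
          exact mul_le_mul_of_nonneg_right (pow_le_pow_left₀ (norm_nonneg z) hz' _)
            (by positivity)
        calc ‖wL p (z / (x : ℂ))‖ ≤ 2 * ‖z / (x : ℂ)‖ ^ (p + 1) := h1
          _ ≤ 2 * (R ^ (p + 1) * (‖(x : ℂ)‖ ^ (p + 1))⁻¹) := by linarith
          _ = 2 * R ^ (p + 1) * (‖(x : ℂ)‖ ^ (p + 1))⁻¹ := by ring
    set G : ℂ → ℂ := fun z => ∑' x, g x z with hGdef
    have hGuniform : TendstoUniformlyOn (fun (t : Finset ↥(γ \ ({0} : Set ℂ))) z =>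
        ∑ x ∈ t, g x z) G atTop (Metric.closedBall 0 R) :=
      tendstoUniformlyOn_tsum hu_sum (fun x z hz => hgu x z hz)
    set C : ℝ := ∑' x, u x with hCdef
    have hGbdd : ∀ z ∈ Metric.closedBall (0:ℂ) R, ‖G z‖ ≤ C :=
      fun z hz => tsum_of_norm_bounded hu_sum.hasSum (fun x => hgu x z hz)
    refine ⟨S, fun z => Complex.exp (G z), ?_, fun z => Complex.exp_ne_zero _, ?_, ?_⟩
    · intro x hx; exact (hmemS x).mpr hx
    · -- differentiability of exp ∘ G on the ball
      have hGdiff : DifferentiableOn ℂ G (Metric.ball 0 R) := by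
        apply TendstoLocallyUniformlyOn.differentiableOn
          ((hGuniform.mono Metric.ball_subset_closedBall).tendstoLocallyUniformlyOn)
          ?_ Metric.isOpen_ball
        apply Eventually.of_forall
        intro t
        apply DifferentiableOn.fun_sum
        intro x _
        by_cases h : x ∈ S
        · simp only [hgdef, if_pos h]; exact differentiableOn_const 0
        · simp only [hgdef, if_neg h]
          intro z hz
          apply DifferentiableAt.differentiableWithinAt
          have hz' : ‖z‖ ≤ R := mem_closedBall_zero_iff.mp (Metric.ball_subset_closedBall hz)
          have hxρ : ρ < ‖(x : ℂ)‖ := hxnorm x h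
          have hxpos : 0 < ‖(x : ℂ)‖ := lt_trans hρpos hxρ
          have hhalf : ‖z / (x : ℂ)‖ ≤ 1 / 2 := by
            rw [norm_div, div_le_iff₀ hxpos]
            nlinarith
          have hd : DifferentiableAt ℂ (fun z : ℂ => z / (x : ℂ)) z :=
            (differentiable_id.div_const _).differentiableAt
          simp only [wL]
          apply DifferentiableAt.add
          · have hmem : (1 : ℂ) - z / (x : ℂ) ∈ Complex.slitPlane := by
              rw [Complex.mem_slitPlane_iff]
              left
              have hre : (z / (x : ℂ)).re ≤ ‖z / (x : ℂ)‖ := by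
                exact Complex.re_le_norm _
              simp only [Complex.sub_re, Complex.one_re]
              linarith
            exact DifferentiableAt.comp z (Complex.differentiableAt_log hmem)
              ((differentiable_const (1:ℂ)).differentiableAt.sub hd)
          · exact (Differentiable.fun_sum fun k _ =>
              ((differentiable_id.div_const _).pow k).div_const _).differentiableAt
      exact Complex.differentiable_exp.comp_differentiableOn hGdiff
    · -- the uniform convergence
      set h : ℂ → ℂ := fun z => ∏ x ∈ S, weierstrassE p (z / (x : ℂ)) with hhdef
      have hhc : Continuous h := (hEnt S).continuous
      obtain ⟨C', hC'⟩ :=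
        (isCompact_closedBall (0:ℂ) R).exists_bound_of_continuousOn hhc.continuousOn
      have hC'0 : 0 ≤ C' := le_trans (norm_nonneg _)
        (hC' 0 (by simp [Metric.mem_closedBall, hR]))
      have hexp : TendstoUniformlyOn (fun (t : Finset ↥(γ \ ({0} : Set ℂ))) z =>
          Complex.exp (∑ x ∈ t, g x z)) (fun z => Complex.exp (G z)) atTop
          (Metric.closedBall 0 R) := by
        rw [Metric.tendstoUniformlyOn_iff] at hGuniform ⊢
        intro ε hε
        have hB : (0:ℝ) < Real.exp C := Real.exp_pos C
        have hδpos : 0 < min 1 (ε / (2 * Real.exp C + 1)) := by positivity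
        filter_upwards [hGuniform _ hδpos] with t ht z hz
        have h1 := ht z hz
        set A := ∑ x ∈ t, g x z with hAdef
        have hdist : ‖A - G z‖ < min 1 (ε / (2 * Real.exp C + 1)) := by
          rw [← dist_eq_norm, dist_comm]; exact h1
        have hle1 : ‖A - G z‖ ≤ 1 := le_of_lt (lt_of_lt_of_le hdist (min_le_left _ _))
        have hfactor : Complex.exp (G z) - Complex.exp A
            = Complex.exp (G z) * (1 - Complex.exp (A - G z)) := by
          rw [mul_sub, mul_one, ← Complex.exp_add]
          ring_nf
        rw [dist_eq_norm, hfactor, norm_mul]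
        have h2 : ‖(1:ℂ) - Complex.exp (A - G z)‖ ≤ 2 * ‖A - G z‖ := by
          rw [norm_sub_rev]
          simpa using
            Complex.norm_exp_sub_one_le (x := A - G z) (by simpa using hle1)
        have h3 : ‖Complex.exp (G z)‖ ≤ Real.exp C := by
          rw [Complex.norm_exp]
          apply Real.exp_le_exp.mpr
          refine le_trans ?_ (hGbdd z hz)
          exact Complex.re_le_norm _
        have h4 : ‖A - G z‖ < ε / (2 * Real.exp C + 1) :=
          lt_of_lt_of_le hdist (min_le_right _ _)
        have h5 : ‖Complex.exp (G z)‖ * ‖(1:ℂ) - Complex.exp (A - G z)‖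
            ≤ Real.exp C * (2 * ‖A - G z‖) := by
          apply mul_le_mul h3 h2 (norm_nonneg _) (le_of_lt hB)
        have h6 : Real.exp C * (2 * ‖A - G z‖) < ε := by
          have h7 : ‖A - G z‖ * (2 * Real.exp C + 1) < ε :=
            (lt_div_iff₀ (by positivity)).mp h4
          nlinarith [norm_nonneg (A - G z), hB]
        linarith
      have hmul : TendstoUniformlyOn (fun (t : Finset ↥(γ \ ({0} : Set ℂ))) z =>
          h z * Complex.exp (∑ x ∈ t, g x z)) (fun z => h z * Complex.exp (G z)) atTop
          (Metric.closedBall 0 R) := by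
        rw [Metric.tendstoUniformlyOn_iff] at hexp ⊢
        intro ε hε
        have hδ : 0 < ε / (C' + 1) := by positivity
        filter_upwards [hexp _ hδ] with t ht z hz
        have h1 := ht z hz
        rw [dist_eq_norm] at h1 ⊢
        have h2 : h z * Complex.exp (G z) - h z * Complex.exp (∑ x ∈ t, g x z)
            = h z * (Complex.exp (G z) - Complex.exp (∑ x ∈ t, g x z)) := by ring
        rw [h2, norm_mul]
        calc ‖h z‖ * ‖Complex.exp (G z) - Complex.exp (∑ x ∈ t, g x z)‖
            ≤ C' * ‖Complex.exp (G z) - Complex.exp (∑ x ∈ t, g x z)‖ :=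
              mul_le_mul_of_nonneg_right (hC' z hz) (norm_nonneg _)
          _ ≤ C' * (ε / (C' + 1)) := mul_le_mul_of_nonneg_left (le_of_lt h1) hC'0
          _ < ε := by
              rw [mul_div_assoc']
              rw [div_lt_iff₀ (by positivity)]
              nlinarith
      apply hmul.congr
      filter_upwards [eventually_ge_atTop S] with t hts
      intro z hz
      have hts' : S ⊆ t := hts
      have hz' : ‖z‖ ≤ R := mem_closedBall_zero_iff.mp hz
      have hsum_eq : ∑ x ∈ t, g x z = ∑ x ∈ t \ S, wL p (z / (x : ℂ)) := by
        rw [← Finset.sum_subset (Finset.sdiff_subset) (fun x hx hx' => ?_)]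
        · apply Finset.sum_congr rfl
          intro x hx
          simp only [hgdef, if_neg (Finset.mem_sdiff.mp hx).2]
        · have hxS : x ∈ S := by
            by_contra hc
            exact hx' (Finset.mem_sdiff.mpr ⟨hx, hc⟩)
          simp only [hgdef, if_pos hxS]
      have hprod : ∀ x ∈ t \ S, weierstrassE p (z / (x : ℂ))
          = Complex.exp (wL p (z / (x : ℂ))) := by
        intro x hx
        have hxS : x ∉ S := (Finset.mem_sdiff.mp hx).2
        have hxρ : ρ < ‖(x : ℂ)‖ := hxnorm x hxS
        apply weierstrassE_eq_exp
        intro hcon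
        rw [div_eq_one_iff_eq (hxne x)] at hcon
        rw [← hcon] at hxρ
        have : (0:ℝ) ≤ R := hR
        simp only [hρdef] at hxρ
        linarith
      calc h z * Complex.exp (∑ x ∈ t, g x z)
          = (∏ x ∈ S, weierstrassE p (z / (x : ℂ)))
            * Complex.exp (∑ x ∈ t \ S, wL p (z / (x : ℂ))) := by rw [hsum_eq]
        _ = (∏ x ∈ S, weierstrassE p (z / (x : ℂ)))
            * ∏ x ∈ t \ S, Complex.exp (wL p (z / (x : ℂ))) := by rw [Complex.exp_sum]
        _ = (∏ x ∈ S, weierstrassE p (z / (x : ℂ)))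
            * ∏ x ∈ t \ S, weierstrassE p (z / (x : ℂ)) := by
              rw [Finset.prod_congr rfl hprod]
        _ = ∏ x ∈ t, weierstrassE p (z / (x : ℂ)) := by
              rw [mul_comm]; exact Finset.prod_sdiff hts'
  -- define f as the tprod
  set f : ℂ → ℂ := fun z => ∏' x : ↥(γ \ ({0} : Set ℂ)), weierstrassE p (z / (x : ℂ)) with hfdef
  -- f agrees with the local limits
  have hagree : ∀ R : ℝ, 0 ≤ R → ∀ (S : Finset ↥(γ \ ({0} : Set ℂ))) (E : ℂ → ℂ),
      (∀ x : ↥(γ \ ({0} : Set ℂ)), ‖(x : ℂ)‖ ≤ 2 * R + 1 → x ∈ S) →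
      TendstoUniformlyOn
        (fun (s : Finset ↥(γ \ ({0} : Set ℂ))) (z : ℂ) =>
          ∏ x ∈ s, weierstrassE p (z / (x : ℂ)))
        (fun z => (∏ x ∈ S, weierstrassE p (z / (x : ℂ))) * E z) atTop
        (Metric.closedBall 0 R) →
      ∀ z ∈ Metric.closedBall (0:ℂ) R,
        f z = (∏ x ∈ S, weierstrassE p (z / (x : ℂ))) * E z := by
    intro R hR S E hS htu z hz
    have hHP : HasProd (fun x : ↥(γ \ ({0} : Set ℂ)) => weierstrassE p (z / (x : ℂ)))
        ((∏ x ∈ S, weierstrassE p (z / (x : ℂ))) * E z) := htu.tendsto_at hz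
    exact hHP.tprod_eq
  refine ⟨f, ?_, ?_, ?_, ?_⟩
  · -- differentiable
    intro z
    set R : ℝ := ‖z‖ + 1 with hRdef
    have hR : 0 ≤ R := by positivity
    obtain ⟨S, E, hS, hEne, hEdiff, htu⟩ := key R hR
    have hEq : Set.EqOn f (fun z => (∏ x ∈ S, weierstrassE p (z / (x : ℂ))) * E z)
        (Metric.ball 0 R) := fun w hw =>
      hagree R hR S E hS htu w (Metric.ball_subset_closedBall hw)
    have hFdiff : DifferentiableOn ℂ
        (fun z => (∏ x ∈ S, weierstrassE p (z / (x : ℂ))) * E z) (Metric.ball 0 R) :=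
      ((hEnt S).differentiableOn).mul hEdiff
    have : DifferentiableOn ℂ f (Metric.ball 0 R) := hFdiff.congr hEq
    have hzmem : z ∈ Metric.ball (0:ℂ) R := by
      rw [mem_ball_zero_iff, hRdef]
      linarith
    exact this.differentiableAt (Metric.isOpen_ball.mem_nhds hzmem)
  · -- uniform convergence on compacts
    intro K hK
    obtain ⟨r, hr⟩ := hK.isBounded.subset_closedBall 0
    set R : ℝ := max r 0 with hRdef
    have hR : 0 ≤ R := le_max_right r 0
    have hKR : K ⊆ Metric.closedBall 0 R :=
      hr.trans (Metric.closedBall_subset_closedBall (le_max_left r 0))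
    obtain ⟨S, E, hS, hEne, hEdiff, htu⟩ := key R hR
    have hEq : Set.EqOn (fun z => (∏ x ∈ S, weierstrassE p (z / (x : ℂ))) * E z) f
        (Metric.closedBall 0 R) := fun w hw => (hagree R hR S E hS htu w hw).symm
    exact (htu.congr_right hEq).mono hKR
  · -- zero set
    intro z
    set R : ℝ := ‖z‖ with hRdef
    have hR : 0 ≤ R := norm_nonneg z
    obtain ⟨S, E, hS, hEne, hEdiff, htu⟩ := key R hR
    have hzmem : z ∈ Metric.closedBall (0:ℂ) R :=
      mem_closedBall_zero_iff.mpr hRdef.ge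
    have hfz := hagree R hR S E hS htu z hzmem
    rw [hfz]
    constructor
    · intro h0
      rcases mul_eq_zero.mp h0 with h1 | h1
      · obtain ⟨x, hxS, hx0⟩ := Finset.prod_eq_zero_iff.mp h1
        by_cases hx1 : z / (x : ℂ) = 1
        · rw [div_eq_one_iff_eq (hxne x)] at hx1
          rw [hx1]
          exact x.2
        · exact absurd hx0 (weierstrassE_ne_zero hx1)
      · exact absurd h1 (hEne z)
    · intro hz
      set x : ↥(γ \ ({0} : Set ℂ)) := ⟨z, hz⟩ with hxdef
      have hxS : x ∈ S := hS x (by simp only [hxdef]; simp only [hRdef]; linarith [norm_nonneg z])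
      have hzero : weierstrassE p (z / (x : ℂ)) = 0 := by
        have : z / (x : ℂ) = 1 := div_self hz.2
        rw [this]; exact weierstrassE_one p
      rw [Finset.prod_eq_zero hxS hzero, zero_mul]
  · -- simple zeros
    intro z₀ hz₀
    have hz₀ne : z₀ ≠ 0 := hz₀.2
    set x₀ : ↥(γ \ ({0} : Set ℂ)) := ⟨z₀, hz₀⟩ with hx₀def
    set R : ℝ := ‖z₀‖ + 1 with hRdef
    have hR : 0 ≤ R := by positivity
    obtain ⟨S, E, hS, hEne, hEdiff, htu⟩ := key R hR
    have hz₀U : z₀ ∈ Metric.ball (0:ℂ) R := by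
      rw [mem_ball_zero_iff, hRdef]
      linarith
    have hx₀S : x₀ ∈ S := hS x₀ (by simp only [hx₀def]; simp only [hRdef]; linarith [norm_nonneg z₀])
    set g : ℂ → ℂ := fun z => Complex.exp (∑ k ∈ Finset.Icc 1 p, (z / z₀) ^ k / (k : ℂ))
      * ((∏ x ∈ S.erase x₀, weierstrassE p (z / (x : ℂ))) * E z) with hgdef
    have hsplit : ∀ z : ℂ, (∏ x ∈ S, weierstrassE p (z / (x : ℂ))) * E z
        = (1 - z / z₀) * g z := by
      intro z
      rw [← Finset.mul_prod_erase S _ hx₀S]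
      have : weierstrassE p (z / (x₀ : ℂ))
          = (1 - z / z₀) * Complex.exp (∑ k ∈ Finset.Icc 1 p, (z / z₀) ^ k / (k : ℂ)) := rfl
      rw [this, hgdef]
      ring
    have hEq : Set.EqOn f (fun z => (1 - z / z₀) * g z) (Metric.ball 0 R) := by
      intro w hw
      rw [hagree R hR S E hS htu w (Metric.ball_subset_closedBall hw), hsplit w]
    have hgd : DifferentiableAt ℂ g z₀ := by
      apply DifferentiableAt.mul
      · exact (Complex.differentiable_exp.comp <| Differentiable.fun_sum fun k _ =>
          ((differentiable_id.div_const _).pow k).div_const _).differentiableAt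
      · apply DifferentiableAt.mul
        · exact ((hEnt (S.erase x₀))).differentiableAt
        · exact hEdiff.differentiableAt (Metric.isOpen_ball.mem_nhds hz₀U)
    have hgne : g z₀ ≠ 0 := by
      apply mul_ne_zero (Complex.exp_ne_zero _)
      apply mul_ne_zero
      · rw [Finset.prod_ne_zero_iff]
        intro x hx
        apply weierstrassE_ne_zero
        intro hcon
        rw [div_eq_one_iff_eq (hxne x)] at hcon
        have : x = x₀ := Subtype.ext hcon.symm
        exact (Finset.mem_erase.mp hx).1 this
      · exact hEne z₀
    have hd1 : HasDerivAt (fun z : ℂ => 1 - z / z₀) (-(z₀⁻¹)) z₀ := by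
      have h := ((hasDerivAt_id z₀).div_const z₀).const_sub 1
      simpa [one_div] using h
    have hd2 : HasDerivAt g (deriv g z₀) z₀ := hgd.hasDerivAt
    have hd : HasDerivAt (fun z => (1 - z / z₀) * g z)
        (-(z₀⁻¹) * g z₀ + (1 - z₀ / z₀) * deriv g z₀) z₀ := hd1.mul hd2
    have hz₀self : (1:ℂ) - z₀ / z₀ = 0 := by rw [div_self hz₀ne]; ring
    rw [hz₀self, zero_mul, add_zero] at hd
    have hev : f =ᶠ[nhds z₀] fun z => (1 - z / z₀) * g z :=
      Filter.eventuallyEq_of_mem (Metric.isOpen_ball.mem_nhds hz₀U) hEq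
    rw [hev.deriv_eq, hd.deriv]
    exact mul_ne_zero (neg_ne_zero.mpr (inv_ne_zero hz₀ne)) hgne

noncomputable def bump (n : ℕ) (x : ℂ) : ℝ := max 0 (min 1 (2 - ‖x‖ / 2 ^ n))

lemma bump_continuous (n : ℕ) : Continuous (bump n) :=
  continuous_const.max (continuous_const.min (continuous_const.sub (continuous_norm.div_const _)))

lemma bump_nonneg (n : ℕ) (x : ℂ) : 0 ≤ bump n x := le_max_left _ _

lemma bump_le_one (n : ℕ) (x : ℂ) : bump n x ≤ 1 :=
  max_le (by norm_num) (min_le_left _ _)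

lemma bump_eq_one {n : ℕ} {x : ℂ} (h : ‖x‖ ≤ 2 ^ n) : bump n x = 1 := by
  have h2 : (0:ℝ) < 2 ^ n := by positivity
  have h3 : ‖x‖ / 2 ^ n ≤ 1 := (div_le_one h2).mpr h
  have h4 : (1:ℝ) ≤ 2 - ‖x‖ / 2 ^ n := by linarith
  rw [bump, min_eq_left h4, max_eq_right (by norm_num)]

lemma bump_eq_zero {n : ℕ} {x : ℂ} (h : 2 ^ (n + 1) ≤ ‖x‖) : bump n x = 0 := by
  have h2 : (0:ℝ) < 2 ^ n := by positivity
  have h3 : 2 - ‖x‖ / 2 ^ n ≤ 0 := by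
    rw [sub_nonpos, le_div_iff₀ h2]
    rw [pow_succ] at h
    linarith
  rw [bump, max_eq_left (le_trans (min_le_right _ _) h3)]

lemma bump_hcs (n : ℕ) : HasCompactSupport (bump n) := by
  apply HasCompactSupport.intro (isCompact_closedBall (0:ℂ) (2 ^ (n + 1)))
  intro x hx
  apply bump_eq_zero
  have := mem_closedBall_zero_iff.not.mp hx
  linarith [lt_of_not_ge this]


end PoissonPfAux

open PoissonPfAux

theorem poisson_random_entire_function
    (π : Measure (Set ℂ)) (hπ : IsPoissonPP π volume) (p : ℕ) (hp : 2 ≤ p) :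
    ∀ᵐ γ ∂π, ∃ f : ℂ → ℂ, Differentiable ℂ f ∧
      (∀ K : Set ℂ, IsCompact K →
        TendstoUniformlyOn
          (fun (s : Finset ↥(γ \ ({0} : Set ℂ))) (z : ℂ) =>
            ∏ x ∈ s, weierstrassE p (z / (x : ℂ)))
          f atTop K) ∧
      (∀ z : ℂ, f z = 0 ↔ z ∈ γ \ {0}) ∧
      (∀ z₀ ∈ γ \ {0}, deriv f z₀ ≠ 0) := by
  classical
  obtain ⟨hprob, hlf, hLap⟩ := hπ
  -- Laplace functional applied to the bump functions
  set c : ℕ → ℝ := fun n => ∫ x : ℂ, (Real.exp (bump n x) - 1) with hcdef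
  have hLapn : ∀ n, ∫ γ, Real.exp (∑' x : γ, bump n (x : ℂ)) ∂π = Real.exp (c n) :=
    fun n => hLap (bump n) (bump_continuous n) (bump_hcs n)
  set a : ℕ → ℝ := fun n => (Real.exp 1 - 1) * (4 ^ (n + 1) * Real.pi) + (n + 1) with hadef
  have hKc : (0:ℝ) ≤ Real.exp 1 - 1 := by
    have := Real.exp_le_exp.mpr (zero_le_one (α := ℝ))
    rw [Real.exp_zero] at this
    linarith
  have ha_nonneg : ∀ n, 0 ≤ a n := by
    intro n
    have hπpos := Real.pi_pos
    have h1 : (0:ℝ) ≤ (Real.exp 1 - 1) * (4 ^ (n + 1) * Real.pi) := by positivity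
    have h2 : (0:ℝ) ≤ (n + 1 : ℝ) := by positivity
    simp only [hadef]
    linarith
  have hca : ∀ n, c n ≤ a n - (n + 1) := by
    intro n
    have hint1 : Integrable (fun x : ℂ => Real.exp (bump n x) - 1) := by
      apply Continuous.integrable_of_hasCompactSupport
      · exact (Real.continuous_exp.comp (bump_continuous n)).sub continuous_const
      · apply HasCompactSupport.intro (isCompact_closedBall (0:ℂ) (2 ^ (n + 1)))
        intro x hx
        have hx' : 2 ^ (n + 1) ≤ ‖x‖ := le_of_lt (lt_of_not_ge (mem_closedBall_zero_iff.not.mp hx))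
        rw [bump_eq_zero hx', Real.exp_zero, sub_self]
    have hmeas : MeasurableSet (Metric.closedBall (0:ℂ) (2 ^ (n + 1))) := measurableSet_closedBall
    have hint2 : Integrable ((Metric.closedBall (0:ℂ) (2 ^ (n + 1))).indicator
        (fun _ => Real.exp 1 - 1)) := by
      rw [integrable_indicator_iff hmeas]
      exact integrableOn_const measure_closedBall_lt_top.ne
    have hle : ∀ x, Real.exp (bump n x) - 1
        ≤ (Metric.closedBall (0:ℂ) (2 ^ (n + 1))).indicator (fun _ => Real.exp 1 - 1) x := by
      intro x
      by_cases hx : x ∈ Metric.closedBall (0:ℂ) (2 ^ (n + 1))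
      · rw [Set.indicator_of_mem hx]
        have := Real.exp_le_exp.mpr (bump_le_one n x)
        linarith
      · rw [Set.indicator_of_notMem hx]
        have hx' : 2 ^ (n + 1) ≤ ‖x‖ := le_of_lt (lt_of_not_ge (mem_closedBall_zero_iff.not.mp hx))
        rw [bump_eq_zero hx', Real.exp_zero, sub_self]
    have h3 : c n ≤ ∫ x, (Metric.closedBall (0:ℂ) (2 ^ (n + 1))).indicator
        (fun _ => Real.exp 1 - 1) x := integral_mono hint1 hint2 hle
    rw [integral_indicator_const _ hmeas] at h3
    have hvol : (volume (Metric.closedBall (0:ℂ) ((2:ℝ) ^ (n + 1)))).toReal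
        = 4 ^ (n + 1) * Real.pi := by
      rw [Complex.volume_closedBall]
      rw [ENNReal.toReal_mul, ENNReal.toReal_pow, ENNReal.toReal_ofReal (by positivity)]
      rw [ENNReal.coe_toReal, NNReal.coe_real_pi]
      congr 1
      rw [← pow_mul, mul_comm (n + 1) 2, pow_mul]
      norm_num
    rw [measureReal_def, hvol, smul_eq_mul] at h3
    simp only [hadef]
    calc c n ≤ 4 ^ (n + 1) * Real.pi * (Real.exp 1 - 1) := h3
      _ = (Real.exp 1 - 1) * (4 ^ (n + 1) * Real.pi) := by ring
      _ = (Real.exp 1 - 1) * (4 ^ (n + 1) * Real.pi) + (↑n + 1) - (↑n + 1) := by ring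
  -- Markov inequality / Chernoff bound
  set s : ℕ → Set (Set ℂ) :=
    fun n => {γ : Set ℂ | Real.exp (a n) ≤ Real.exp (∑' x : γ, bump n (x : ℂ))} with hsdef
  have hsn : ∀ n, (π (s n)).toReal ≤ Real.exp (-(n + 1 : ℝ)) := by
    intro n
    have hint : Integrable (fun γ : Set ℂ => Real.exp (∑' x : γ, bump n (x : ℂ))) π := by
      by_contra hcon
      have := hLapn n
      rw [integral_undef hcon] at this
      exact (Real.exp_pos (c n)).ne' this.symm
    have hm := mul_meas_ge_le_integral_of_nonneg
      (Eventually.of_forall fun γ : Set ℂ => (Real.exp_pos _).le) hint (Real.exp (a n))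
    rw [hLapn n] at hm
    have h2 : Real.exp (c n) ≤ Real.exp (a n) * Real.exp (-(n + 1 : ℝ)) := by
      rw [← Real.exp_add]
      apply Real.exp_le_exp.mpr
      have := hca n
      linarith
    have h3 := le_trans hm h2
    exact le_of_mul_le_mul_left h3 (Real.exp_pos (a n))
  have htsum : (∑' n, π (s n)) ≠ ⊤ := by
    have hbound : ∀ n, π (s n) ≤ ENNReal.ofReal ((1/2 : ℝ) ^ n) := by
      intro n
      have h1 : π (s n) ≠ ⊤ := measure_ne_top π _
      rw [← ENNReal.ofReal_toReal h1]
      apply ENNReal.ofReal_le_ofReal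
      refine le_trans (hsn n) ?_
      have h2 : Real.exp (-(n + 1 : ℝ)) = Real.exp (-1) ^ (n + 1) := by
        rw [← Real.exp_nat_mul]
        congr 1
        push_cast
        ring
      have h4 : (2:ℝ) ≤ Real.exp 1 := by
        have := Real.add_one_le_exp 1
        linarith
      have h3 : Real.exp (-1) ≤ 1/2 := by
        rw [Real.exp_neg]
        rw [inv_le_comm₀ (Real.exp_pos 1) (by norm_num)]
        norm_num
        linarith
      calc Real.exp (-(n + 1 : ℝ)) = Real.exp (-1) ^ (n + 1) := h2
        _ ≤ (1/2 : ℝ) ^ (n + 1) := pow_le_pow_left₀ (Real.exp_pos _).le h3 _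
        _ ≤ (1/2 : ℝ) ^ n := pow_le_pow_of_le_one (by norm_num) (by norm_num) (Nat.le_succ n)
    refine ne_top_of_le_ne_top ?_ (ENNReal.tsum_le_tsum hbound)
    have heq : ∀ n : ℕ, ENNReal.ofReal ((1/2 : ℝ) ^ n) = ENNReal.ofReal (1/2) ^ n :=
      fun n => ENNReal.ofReal_pow (by norm_num) n
    simp_rw [heq]
    rw [ENNReal.tsum_geometric]
    apply ENNReal.inv_ne_top.mpr
    intro hcon
    rw [tsub_eq_zero_iff_le] at hcon
    have : ENNReal.ofReal (1/2) < 1 := ENNReal.ofReal_lt_one.mpr (by norm_num)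
    exact absurd hcon (not_le.mpr this)
  have hBC := MeasureTheory.ae_eventually_notMem htsum
  filter_upwards [hlf, hBC] with γ hγlf hγs
  obtain ⟨N, hN⟩ := eventually_atTop.mp hγs
  -- counting bound
  have hsum_bump : ∀ n, Summable (fun x : ↥γ => bump n (x : ℂ)) := by
    intro n
    apply summable_of_ne_finset_zero
      (s := (finite_norm_le hγlf (le_refl γ) ((2:ℝ) ^ (n + 1))).toFinset)
    intro x hx
    apply bump_eq_zero
    rw [Set.Finite.mem_toFinset] at hx
    exact le_of_lt (lt_of_not_ge hx)
  have hcount : ∀ n, N ≤ n → ∀ t : Finset ↥γ, (∀ x ∈ t, ‖(x : ℂ)‖ ≤ 2 ^ n) →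
      (t.card : ℝ) ≤ a n := by
    intro n hn t ht
    have h1 : (t.card : ℝ) = ∑ _x ∈ t, (1:ℝ) := by simp
    have h2 : ∑ x ∈ t, (1:ℝ) ≤ ∑ x ∈ t, bump n (x : ℂ) :=
      Finset.sum_le_sum fun x hx => (bump_eq_one (ht x hx)).ge
    have h3 : ∑ x ∈ t, bump n (x : ℂ) ≤ ∑' x : ↥γ, bump n (x : ℂ) :=
      Summable.sum_le_tsum t (fun x _ => bump_nonneg n _) (hsum_bump n)
    have h4 : ∑' x : ↥γ, bump n (x : ℂ) < a n := by
      have h5 := hN n hn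
      simp only [hsdef, Set.mem_setOf_eq, not_le] at h5
      exact Real.exp_lt_exp.mp h5
    linarith
  -- summability of the inverse powers
  apply exists_entire p γ hγlf
  set E₀ : Finset ↥(γ \ ({0} : Set ℂ)) :=
    (finite_norm_le hγlf Set.diff_subset ((2:ℝ) ^ N)).toFinset with hE₀def
  set c₀ : ℝ := ∑ x ∈ E₀, (‖(x : ℂ)‖ ^ (p + 1))⁻¹ with hc₀def
  set b : ℕ → ℝ := fun n => a (N + n + 1) * (((2:ℝ) ^ (N + n)) ^ (p + 1))⁻¹ with hbdef
  have hb_nonneg : ∀ n, 0 ≤ b n := fun n => mul_nonneg (ha_nonneg _) (by positivity)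
  have hb_sum : Summable b := by
    set C₂ : ℝ := (Real.exp 1 - 1) * 4 * Real.pi + 1 with hC₂def
    have hπpos := Real.pi_pos
    have hC₂pos : 0 < C₂ := by
      have h1 : 0 ≤ (Real.exp 1 - 1) * 4 * Real.pi := by positivity
      simp only [hC₂def]; linarith
    have ham : ∀ m : ℕ, a m ≤ C₂ * 4 ^ m := by
      intro m
      have h3 : (m : ℝ) + 1 ≤ 2 ^ m := by exact_mod_cast Nat.lt_two_pow_self (n := m)
      have h2 : (2:ℝ) ^ m ≤ 4 ^ m := pow_le_pow_left₀ (by norm_num) (by norm_num) m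
      have h4 : (0:ℝ) < 4 ^ m := by positivity
      simp only [hadef, hC₂def]
      have h5 : (Real.exp 1 - 1) * (4 ^ (m + 1) * Real.pi)
          = (Real.exp 1 - 1) * 4 * Real.pi * 4 ^ m := by ring
      rw [h5]
      have h6 : (m : ℝ) + 1 ≤ 4 ^ m := by linarith
      nlinarith [mul_le_mul_of_nonneg_right (le_refl ((Real.exp 1 - 1) * 4 * Real.pi)) h4.le]
    have hkey : ∀ n, b n ≤ (4 * C₂ * ((1/2 : ℝ)) ^ N) * (1/2 : ℝ) ^ n := by
      intro n
      have hppos : (0:ℝ) < ((2:ℝ) ^ (N + n)) ^ (p + 1) := by positivity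
      have h8 : ((2:ℝ) ^ (N + n)) ^ 3 ≤ ((2:ℝ) ^ (N + n)) ^ (p + 1) := by
        apply pow_le_pow_right₀ (one_le_pow₀ (by norm_num : (1:ℝ) ≤ 2)) (by omega)
      have hpow : (((2:ℝ) ^ (N + n)) ^ (p + 1))⁻¹ ≤ (((2:ℝ) ^ (N + n)) ^ 3)⁻¹ :=
        inv_anti₀ (by positivity) h8
      have h9 : ((2:ℝ) ^ (N + n)) ^ 3 = 8 ^ (N + n) := by
        rw [← pow_mul, mul_comm (N + n) 3, pow_mul]
        norm_num
      have h10 : b n ≤ C₂ * 4 ^ (N + n + 1) * ((8:ℝ) ^ (N + n))⁻¹ := by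
        simp only [hbdef]
        calc a (N + n + 1) * (((2:ℝ) ^ (N + n)) ^ (p + 1))⁻¹
            ≤ C₂ * 4 ^ (N + n + 1) * (((2:ℝ) ^ (N + n)) ^ (p + 1))⁻¹ :=
              mul_le_mul_of_nonneg_right (ham _) (by positivity)
          _ ≤ C₂ * 4 ^ (N + n + 1) * (((2:ℝ) ^ (N + n)) ^ 3)⁻¹ :=
              mul_le_mul_of_nonneg_left hpow (by positivity)
          _ = C₂ * 4 ^ (N + n + 1) * ((8:ℝ) ^ (N + n))⁻¹ := by rw [h9]
      refine le_trans h10 (le_of_eq ?_)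
      have h11 : ∀ m : ℕ, (4:ℝ) ^ m * ((8:ℝ) ^ m)⁻¹ = (1/2 : ℝ) ^ m := by
        intro m
        rw [← div_eq_mul_inv, ← div_pow]
        norm_num
      calc C₂ * 4 ^ (N + n + 1) * ((8:ℝ) ^ (N + n))⁻¹
          = 4 * C₂ * ((4:ℝ) ^ (N + n) * ((8:ℝ) ^ (N + n))⁻¹) := by rw [pow_succ]; ring
        _ = 4 * C₂ * (1/2:ℝ) ^ (N + n) := by rw [h11]
        _ = 4 * C₂ * ((1/2:ℝ) ^ N * (1/2:ℝ) ^ n) := by rw [pow_add]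
        _ = 4 * C₂ * (1/2:ℝ) ^ N * (1/2:ℝ) ^ n := by ring
    exact Summable.of_nonneg_of_le hb_nonneg hkey
      ((summable_geometric_of_lt_one (by norm_num) (by norm_num)).mul_left _)
  refine summable_of_sum_le (c := c₀ + ∑' n, b n) (fun x => by positivity) ?_
  intro U
  have hex : ∀ x : ↥(γ \ ({0} : Set ℂ)), ∃ n : ℕ, ‖(x : ℂ)‖ ≤ 2 ^ (N + n + 1) := by
    intro x
    obtain ⟨k, hk⟩ := pow_unbounded_of_one_lt (‖(x : ℂ)‖) (by norm_num : (1:ℝ) < 2)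
    exact ⟨k, le_trans hk.le (pow_le_pow_right₀ (by norm_num) (by omega))⟩
  set ν : ↥(γ \ ({0} : Set ℂ)) → ℕ := fun x => Nat.find (hex x) with hνdef
  have hν1 : ∀ x : ↥(γ \ ({0} : Set ℂ)), ‖(x : ℂ)‖ ≤ 2 ^ (N + ν x + 1) :=
    fun x => Nat.find_spec (hex x)
  have hν2 : ∀ x : ↥(γ \ ({0} : Set ℂ)), (2:ℝ) ^ N < ‖(x : ℂ)‖ →
      (2:ℝ) ^ (N + ν x) < ‖(x : ℂ)‖ := by
    intro x hx
    rcases Nat.eq_zero_or_pos (ν x) with h0 | hpos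
    · rw [h0, add_zero]; exact hx
    · have hmin := Nat.find_min (hex x) (Nat.sub_lt hpos one_pos)
      have heq : N + (ν x - 1) + 1 = N + ν x := by omega
      rw [heq] at hmin
      exact lt_of_not_ge hmin
  have hsplit := Finset.sum_inter_add_sum_sdiff U E₀ (fun x => (‖(x : ℂ)‖ ^ (p + 1))⁻¹)
  have h1 : ∑ x ∈ U ∩ E₀, (‖(x : ℂ)‖ ^ (p + 1))⁻¹ ≤ c₀ :=
    Finset.sum_le_sum_of_subset_of_nonneg Finset.inter_subset_right (fun x _ _ => by positivity)
  set V := U \ E₀ with hVdef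
  have hVnorm : ∀ x ∈ V, (2:ℝ) ^ N < ‖(x : ℂ)‖ := by
    intro x hx
    have hxE : x ∉ E₀ := (Finset.mem_sdiff.mp hx).2
    rw [hE₀def, Set.Finite.mem_toFinset] at hxE
    exact lt_of_not_ge hxE
  have h2 : ∑ x ∈ V, (‖(x : ℂ)‖ ^ (p + 1))⁻¹ ≤ ∑' n, b n := by
    have e1 : V.filter (fun i => ν i ∈ V.image ν) = V :=
      Finset.filter_true_of_mem fun x hx => Finset.mem_image_of_mem ν hx
    have e2 : ∑ j ∈ V.image ν, ∑ x ∈ V.filter (fun i => ν i = j), (‖(x : ℂ)‖ ^ (p + 1))⁻¹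
        = ∑ x ∈ V, (‖(x : ℂ)‖ ^ (p + 1))⁻¹ := by
      rw [Finset.sum_fiberwise_eq_sum_filter, e1]
    rw [← e2]
    have h3 : ∀ j ∈ V.image ν,
        ∑ x ∈ V.filter (fun i => ν i = j), (‖(x : ℂ)‖ ^ (p + 1))⁻¹ ≤ b j := by
      intro j _
      set W := V.filter (fun i => ν i = j) with hWdef
      have hcard : (W.card : ℝ) ≤ a (N + j + 1) := by
        have hembi : Function.Injective
            (fun x : ↥(γ \ ({0} : Set ℂ)) => (⟨(x : ℂ), x.2.1⟩ : ↥γ)) := by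
          intro x y hxy
          apply Subtype.ext
          exact congrArg (Subtype.val : ↥γ → ℂ) hxy
        have hc := hcount (N + j + 1) (by omega) (W.map ⟨_, hembi⟩) ?_
        · rwa [Finset.card_map] at hc
        · intro y hy
          obtain ⟨x, hx, rfl⟩ := Finset.mem_map.mp hy
          have hxj : ν x = j := (Finset.mem_filter.mp hx).2
          have hsp := hν1 x
          rw [hxj] at hsp
          exact hsp
      have hterm : ∀ x ∈ W, (‖(x : ℂ)‖ ^ (p + 1))⁻¹ ≤ (((2:ℝ) ^ (N + j)) ^ (p + 1))⁻¹ := by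
        intro x hx
        have hxV : x ∈ V := (Finset.mem_filter.mp hx).1
        have hxj : ν x = j := (Finset.mem_filter.mp hx).2
        have hlt := hν2 x (hVnorm x hxV)
        rw [hxj] at hlt
        apply inv_anti₀ (by positivity)
        exact pow_le_pow_left₀ (by positivity) hlt.le _
      calc ∑ x ∈ W, (‖(x : ℂ)‖ ^ (p + 1))⁻¹
          ≤ ∑ _x ∈ W, (((2:ℝ) ^ (N + j)) ^ (p + 1))⁻¹ := Finset.sum_le_sum hterm
        _ = (W.card : ℝ) * (((2:ℝ) ^ (N + j)) ^ (p + 1))⁻¹ := by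
            rw [Finset.sum_const, nsmul_eq_mul]
        _ ≤ a (N + j + 1) * (((2:ℝ) ^ (N + j)) ^ (p + 1))⁻¹ :=
            mul_le_mul_of_nonneg_right hcard (by positivity)
        _ = b j := rfl
    calc ∑ j ∈ V.image ν, ∑ x ∈ V.filter (fun i => ν i = j), (‖(x : ℂ)‖ ^ (p + 1))⁻¹
        ≤ ∑ j ∈ V.image ν, b j := Finset.sum_le_sum h3
      _ ≤ ∑' j, b j := Summable.sum_le_tsum _ (fun j _ => hb_nonneg j) hb_sum
  linarith [hsplit, h1, h2]
end
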